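/- Let α and β be convolution-invertible two-cocycles on a Hopf algebra H that are cohomologous via a convolution-invertible linear form λ, i.e., β(x,y) = λ(x₁)λ(y₁)α(x₂,y₂)λ⁻¹(x₃y₃) for all x,y ∈ H. Then the map x ↦ λ⁻¹(x₁)x₂ is an isomorphism of right H-comodule algebras from ᵅH to ᵝH. -/

import Mathlib

open TensorProduct

noncomputable section

variable (k : Type) [Field k]

/-- Convolution product of two linear maps from a coalgebra to an algebra. -/
def conv {C A : Type} [AddCommGroup C] [Module k C] [Coalgebra k C]
    [Ring A] [Algebra k A] (f g : C →ₗ[k] A) : C →ₗ[k] A :=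
  LinearMap.mul' k A ∘ₗ TensorProduct.map f g ∘ₗ Coalgebra.comul

/-- Unit of the convolution algebra: `unit ∘ counit`. -/
def convOne {C A : Type} [AddCommGroup C] [Module k C] [Coalgebra k C]
    [Ring A] [Algebra k A] : C →ₗ[k] A :=
  Algebra.linearMap k A ∘ₗ Coalgebra.counit

variable {H : Type} [Ring H] [HopfAlgebra k H]

/-- The two-cocycle condition `β(x₁,y₁) β(x₂y₂,z) = β(y₁,z₁) β(x,y₂z₂)`, as an equality
of linear maps on `(H ⊗ H) ⊗ H`. -/
def IsCocycle {A : Type} [CommRing A] [Algebra k A] (β : H ⊗[k] H →ₗ[k] A) : Prop :=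
  conv k (LinearMap.mul' k A ∘ₗ TensorProduct.map β (convOne k))
      (β ∘ₗ TensorProduct.map (LinearMap.mul' k H) LinearMap.id)
  = conv k
      (LinearMap.mul' k A ∘ₗ TensorProduct.map (convOne k) β
        ∘ₗ (TensorProduct.assoc k H H H).toLinearMap)
      (β ∘ₗ TensorProduct.map LinearMap.id (LinearMap.mul' k H)
        ∘ₗ (TensorProduct.assoc k H H H).toLinearMap)

/-- `β` and `βinv` are mutually convolution-inverse bilinear forms. -/
def IsConvInverse (β βinv : H ⊗[k] H →ₗ[k] k) : Prop :=
  conv k β βinv = convOne k ∧ conv k βinv β = convOne k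

/-- The multiplication `x ⊗ y ↦ α(x₁,y₁) x₂y₂` of the twisted algebra `ᵅH`. -/
def twMul (α : H ⊗[k] H →ₗ[k] k) : H ⊗[k] H →ₗ[k] H :=
  conv k (Algebra.linearMap k H ∘ₗ α) (LinearMap.mul' k H)

section ConvLemmas

variable {C D A B : Type}
variable [AddCommGroup C] [Module k C] [Coalgebra k C]
variable [AddCommGroup D] [Module k D] [Coalgebra k D]
variable [Ring A] [Algebra k A] [Ring B] [Algebra k B]

lemma map_comul_left {M N : Type} [AddCommGroup M] [Module k M] [AddCommGroup N] [Module k N]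
    (X : C ⊗[k] C →ₗ[k] M) (Y : C →ₗ[k] N) :
    TensorProduct.map (X ∘ₗ Coalgebra.comul) Y
      = TensorProduct.map X Y ∘ₗ (Coalgebra.comul (R := k) (A := C)).rTensor C := by
  rw [LinearMap.rTensor, ← TensorProduct.map_comp, LinearMap.comp_id]

lemma map_comul_right {M N : Type} [AddCommGroup M] [Module k M] [AddCommGroup N] [Module k N]
    (X : C ⊗[k] C →ₗ[k] M) (Y : C →ₗ[k] N) :
    TensorProduct.map Y (X ∘ₗ Coalgebra.comul)
      = TensorProduct.map Y X ∘ₗ (Coalgebra.comul (R := k) (A := C)).lTensor C := by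
  rw [LinearMap.lTensor, ← TensorProduct.map_comp, LinearMap.comp_id]

/-- Pointwise reassociation along coassociativity. -/
lemma coassoc_point {M : Type} [AddCommGroup M] [Module k M]
    (F : (C ⊗[k] C) ⊗[k] C →ₗ[k] M) (G : C ⊗[k] (C ⊗[k] C) →ₗ[k] M)
    (h : F = G ∘ₗ (TensorProduct.assoc k C C C).toLinearMap) (x : C) :
    F ((Coalgebra.comul (R := k) (A := C)).rTensor C (Coalgebra.comul x))
      = G ((Coalgebra.comul (R := k) (A := C)).lTensor C (Coalgebra.comul x)) := by
  rw [h, LinearMap.comp_apply, LinearEquiv.coe_coe]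
  congr 1
  exact Coalgebra.coassoc_apply x

lemma conv_assoc (f g h : C →ₗ[k] A) :
    conv k (conv k f g) h = conv k f (conv k g h) := by
  ext x
  simp only [conv, ← LinearMap.comp_assoc]
  simp only [map_comul_left, map_comul_right]
  simp only [LinearMap.comp_apply]
  exact coassoc_point k
    (LinearMap.mul' k A ∘ₗ TensorProduct.map (LinearMap.mul' k A ∘ₗ TensorProduct.map f g) h)
    (LinearMap.mul' k A ∘ₗ TensorProduct.map f (LinearMap.mul' k A ∘ₗ TensorProduct.map g h))
    (by apply TensorProduct.ext_threefold; intro a b c; simp [mul_assoc]) x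

lemma conv_one_left (m : C →ₗ[k] A) : conv k (convOne k) m = m := by
  have h : TensorProduct.map (convOne k (C := C) (A := A)) m
      = TensorProduct.map (Algebra.linearMap k A) m ∘ₗ
        (Coalgebra.counit (R := k) (A := C)).rTensor C := by
    unfold convOne
    rw [LinearMap.rTensor, ← TensorProduct.map_comp, LinearMap.comp_id]
  ext x
  simp only [conv, LinearMap.comp_apply, h]
  rw [Coalgebra.rTensor_counit_comul]
  simp

lemma conv_one_right (m : C →ₗ[k] A) : conv k m (convOne k) = m := by
  have h : TensorProduct.map m (convOne k (C := C) (A := A))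
      = TensorProduct.map m (Algebra.linearMap k A) ∘ₗ
        (Coalgebra.counit (R := k) (A := C)).lTensor C := by
    unfold convOne
    rw [LinearMap.lTensor, ← TensorProduct.map_comp, LinearMap.comp_id]
  ext x
  simp only [conv, LinearMap.comp_apply, h]
  rw [Coalgebra.lTensor_counit_comul]
  simp

lemma comp_conv_unit (T : A →ₗ[k] B) (ψ : C →ₗ[k] k) (m : C →ₗ[k] A) :
    T ∘ₗ conv k (Algebra.linearMap k A ∘ₗ ψ) m
      = conv k (Algebra.linearMap k B ∘ₗ ψ) (T ∘ₗ m) := by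
  have h : T ∘ₗ LinearMap.mul' k A ∘ₗ TensorProduct.map (Algebra.linearMap k A ∘ₗ ψ) m
      = LinearMap.mul' k B ∘ₗ TensorProduct.map (Algebra.linearMap k B ∘ₗ ψ) (T ∘ₗ m) := by
    apply TensorProduct.ext'
    intro a b
    simp only [LinearMap.comp_apply, TensorProduct.map_tmul, LinearMap.mul'_apply,
      Algebra.linearMap_apply]
    rw [← Algebra.smul_def, ← Algebra.smul_def, map_smul]
  ext x
  simp only [conv, LinearMap.comp_apply]
  simpa using LinearMap.congr_fun h (Coalgebra.comul x)

lemma conv_comp_coalgHom (T : D →ₗ[k] C)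
    (hT : Coalgebra.comul ∘ₗ T = TensorProduct.map T T ∘ₗ Coalgebra.comul)
    (f g : C →ₗ[k] A) : conv k f g ∘ₗ T = conv k (f ∘ₗ T) (g ∘ₗ T) := by
  ext x
  simp only [conv, LinearMap.comp_apply]
  rw [show Coalgebra.comul (T x) = TensorProduct.map T T (Coalgebra.comul x) from
    LinearMap.congr_fun hT x, ← LinearMap.comp_apply (TensorProduct.map f g),
    ← TensorProduct.map_comp]

lemma algebraMap_comp_conv (φ ψ : C →ₗ[k] k) :
    Algebra.linearMap k A ∘ₗ conv k φ ψ
      = conv k (Algebra.linearMap k A ∘ₗ φ) (Algebra.linearMap k A ∘ₗ ψ) := by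
  have h : Algebra.linearMap k A ∘ₗ LinearMap.mul' k k ∘ₗ TensorProduct.map φ ψ
      = LinearMap.mul' k A ∘ₗ
        TensorProduct.map (Algebra.linearMap k A ∘ₗ φ) (Algebra.linearMap k A ∘ₗ ψ) := by
    apply TensorProduct.ext'
    intro a b
    simp [map_mul]
  ext x
  simp only [conv, LinearMap.comp_apply]
  simpa using LinearMap.congr_fun h (Coalgebra.comul x)

lemma comul_tensor_def :
    Coalgebra.comul (R := k) (A := C ⊗[k] D)
      = (TensorProduct.tensorTensorTensorComm k C C D D).toLinearMap
        ∘ₗ TensorProduct.map Coalgebra.comul Coalgebra.comul := rfl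

lemma counit_tensor_def :
    Coalgebra.counit (R := k) (A := C ⊗[k] D)
      = LinearMap.mul' k k ∘ₗ TensorProduct.map Coalgebra.counit Coalgebra.counit := by
  apply TensorProduct.ext'
  intro x y
  simp [TensorProduct.counit_tmul, mul_comm]

lemma map_conv_conv (ψ : C →ₗ[k] k) (φ : D →ₗ[k] k) (m : C →ₗ[k] A) (n : D →ₗ[k] B) :
    TensorProduct.map (conv k (Algebra.linearMap k A ∘ₗ ψ) m)
        (conv k (Algebra.linearMap k B ∘ₗ φ) n)
      = conv k (Algebra.linearMap k (A ⊗[k] B) ∘ₗ LinearMap.mul' k k ∘ₗ TensorProduct.map ψ φ)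
          (TensorProduct.map m n) := by
  have h : TensorProduct.map
        (LinearMap.mul' k A ∘ₗ TensorProduct.map (Algebra.linearMap k A ∘ₗ ψ) m)
        (LinearMap.mul' k B ∘ₗ TensorProduct.map (Algebra.linearMap k B ∘ₗ φ) n)
      = (LinearMap.mul' k (A ⊗[k] B) ∘ₗ TensorProduct.map
          (Algebra.linearMap k (A ⊗[k] B) ∘ₗ LinearMap.mul' k k ∘ₗ TensorProduct.map ψ φ)
          (TensorProduct.map m n))
        ∘ₗ (TensorProduct.tensorTensorTensorComm k C C D D).toLinearMap := by
    apply TensorProduct.ext_fourfold'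
    intro a b c d
    simp only [LinearMap.comp_apply, TensorProduct.map_tmul, LinearMap.mul'_apply,
      Algebra.linearMap_apply, LinearEquiv.coe_coe, TensorProduct.tensorTensorTensorComm_tmul]
    rw [← Algebra.smul_def, ← Algebra.smul_def, ← Algebra.smul_def]
    simp [TensorProduct.smul_tmul', smul_smul, mul_comm, TensorProduct.tmul_smul]
  apply TensorProduct.ext'
  intro x y
  have h2 := LinearMap.congr_fun h (Coalgebra.comul x ⊗ₜ[k] Coalgebra.comul y)
  simp only [conv, LinearMap.comp_apply, TensorProduct.map_tmul, comul_tensor_def,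
    LinearEquiv.coe_coe] at h2 ⊢
  exact h2

lemma conv_forms_tmul (ψ ψ' : C →ₗ[k] k) (φ φ' : D →ₗ[k] k) :
    conv k (LinearMap.mul' k k ∘ₗ TensorProduct.map ψ φ)
        (LinearMap.mul' k k ∘ₗ TensorProduct.map ψ' φ')
      = LinearMap.mul' k k ∘ₗ TensorProduct.map (conv k ψ ψ') (conv k φ φ') := by
  have h : (LinearMap.mul' k k ∘ₗ TensorProduct.map
        (LinearMap.mul' k k ∘ₗ TensorProduct.map ψ φ)
        (LinearMap.mul' k k ∘ₗ TensorProduct.map ψ' φ'))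
        ∘ₗ (TensorProduct.tensorTensorTensorComm k C C D D).toLinearMap
      = LinearMap.mul' k k ∘ₗ TensorProduct.map
          (LinearMap.mul' k k ∘ₗ TensorProduct.map ψ ψ')
          (LinearMap.mul' k k ∘ₗ TensorProduct.map φ φ') := by
    apply TensorProduct.ext_fourfold'
    intro a b c d
    simp only [LinearMap.comp_apply, TensorProduct.map_tmul, LinearMap.mul'_apply,
      LinearEquiv.coe_coe, TensorProduct.tensorTensorTensorComm_tmul]
    ring
  apply TensorProduct.ext'
  intro x y
  have h2 := LinearMap.congr_fun h (Coalgebra.comul x ⊗ₜ[k] Coalgebra.comul y)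
  simp only [conv, LinearMap.comp_apply, TensorProduct.map_tmul, comul_tensor_def,
    LinearEquiv.coe_coe] at h2 ⊢
  exact h2

lemma convOne_tensor :
    LinearMap.mul' k k ∘ₗ TensorProduct.map (convOne k (C := C) (A := k))
        (convOne k (C := D) (A := k))
      = convOne k (C := C ⊗[k] D) (A := k) := by
  apply TensorProduct.ext'
  intro x y
  simp [convOne, counit_tensor_def]

lemma map_convunit_comp_comul (ψ : C →ₗ[k] k) (m : C →ₗ[k] A) (n : C →ₗ[k] B) :
    TensorProduct.map (conv k (Algebra.linearMap k A ∘ₗ ψ) m) n ∘ₗ Coalgebra.comul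
      = conv k (Algebra.linearMap k (A ⊗[k] B) ∘ₗ ψ)
          (TensorProduct.map m n ∘ₗ Coalgebra.comul) := by
  ext x
  simp only [conv, ← LinearMap.comp_assoc]
  simp only [map_comul_left, map_comul_right]
  simp only [LinearMap.comp_apply]
  exact coassoc_point k
    (TensorProduct.map (LinearMap.mul' k A ∘ₗ TensorProduct.map (Algebra.linearMap k A ∘ₗ ψ) m) n)
    (LinearMap.mul' k (A ⊗[k] B) ∘ₗ TensorProduct.map (Algebra.linearMap k (A ⊗[k] B) ∘ₗ ψ)
      (TensorProduct.map m n))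
    (by
      apply TensorProduct.ext_threefold
      intro a b c
      simp only [LinearMap.comp_apply, TensorProduct.map_tmul, LinearMap.mul'_apply,
        Algebra.linearMap_apply, LinearEquiv.coe_coe, TensorProduct.assoc_tmul]
      rw [← Algebra.smul_def, ← Algebra.smul_def, TensorProduct.smul_tmul']) x

lemma algebraMap_comp_convOne :
    Algebra.linearMap k A ∘ₗ convOne k (C := C) (A := k) = convOne k (C := C) (A := A) := by
  unfold convOne
  ext x
  simp

end ConvLemmas

variable {H : Type} [Ring H] [HopfAlgebra k H]

lemma mulmul_tttc :
    TensorProduct.map (LinearMap.mul' k H) (LinearMap.mul' k H)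
        ∘ₗ (TensorProduct.tensorTensorTensorComm k H H H H).toLinearMap
      = LinearMap.mul' k (H ⊗[k] H) := by
  apply TensorProduct.ext_fourfold'
  intro a b c d
  simp [Algebra.TensorProduct.tmul_mul_tmul]

lemma mul'_coalgHom :
    Coalgebra.comul ∘ₗ LinearMap.mul' k H
      = TensorProduct.map (LinearMap.mul' k H) (LinearMap.mul' k H)
        ∘ₗ Coalgebra.comul (R := k) (A := H ⊗[k] H) := by
  apply TensorProduct.ext'
  intro x y
  simp only [LinearMap.comp_apply, LinearMap.mul'_apply, comul_tensor_def,
    TensorProduct.map_tmul, LinearEquiv.coe_coe]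
  rw [Bialgebra.comul_mul]
  exact (LinearMap.congr_fun (mulmul_tttc k) (Coalgebra.comul x ⊗ₜ[k] Coalgebra.comul y)).symm.trans
    (by simp)

/-- If two convolution-invertible two-cocycles `α`, `β` are cohomologous via a
convolution-invertible linear form `λ`, i.e. `β(x,y) = λ(x₁)λ(y₁)α(x₂,y₂)λ⁻¹(x₃y₃)`, then
`x ↦ λ⁻¹(x₁)x₂` is an isomorphism of right `H`-comodule algebras `ᵅH → ᵝH`. -/
theorem twisted_comodule_algebra_iso_of_cohomologous
    (α αinv β βinv : H ⊗[k] H →ₗ[k] k) (lam lamInv : H →ₗ[k] k)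
    (hα : IsCocycle k α) (hαinv : IsConvInverse k α αinv)
    (hβ : IsCocycle k β) (hβinv : IsConvInverse k β βinv)
    (hlam : conv k lam lamInv = convOne k) (hlam' : conv k lamInv lam = convOne k)
    (hcohom : β = conv k
        (conv k (LinearMap.mul' k k ∘ₗ TensorProduct.map lam lam) α)
        (lamInv ∘ₗ LinearMap.mul' k H)) :
    -- the map `f : x ↦ λ⁻¹(x₁) x₂`
    letI f : H →ₗ[k] H := conv k (Algebra.linearMap k H ∘ₗ lamInv) LinearMap.id
    Function.Bijective f ∧
    -- `f` is multiplicative for the twisted products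
    (∀ x y : H, f (twMul k α (x ⊗ₜ[k] y)) = twMul k β (f x ⊗ₜ[k] f y)) ∧
    -- `f` sends the unit of `ᵅH` to the unit of `ᵝH`
    f (((α (1 ⊗ₜ[k] 1))⁻¹ : k) • (1 : H)) = ((β (1 ⊗ₜ[k] 1))⁻¹ : k) • (1 : H) ∧
    -- `f` is a morphism of right `H`-comodules (the coaction being `Δ`)
    Coalgebra.comul (R := k) ∘ₗ f = TensorProduct.map f LinearMap.id ∘ₗ Coalgebra.comul := by

  set f : H →ₗ[k] H := conv k (Algebra.linearMap k H ∘ₗ lamInv) LinearMap.id with hfdef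
  set g : H →ₗ[k] H := conv k (Algebra.linearMap k H ∘ₗ lam) LinearMap.id with hgdef
  -- f and g are mutually inverse
  have hfg : f ∘ₗ g = LinearMap.id := by
    calc f ∘ₗ g = conv k (Algebra.linearMap k H ∘ₗ lam) (f ∘ₗ LinearMap.id) :=
          comp_conv_unit k f lam LinearMap.id
      _ = conv k (Algebra.linearMap k H ∘ₗ lam)
            (conv k (Algebra.linearMap k H ∘ₗ lamInv) LinearMap.id) := by
          rw [LinearMap.comp_id]
      _ = conv k (conv k (Algebra.linearMap k H ∘ₗ lam) (Algebra.linearMap k H ∘ₗ lamInv))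
            LinearMap.id := (conv_assoc k _ _ _).symm
      _ = conv k (Algebra.linearMap k H ∘ₗ conv k lam lamInv) LinearMap.id := by
          rw [algebraMap_comp_conv]
      _ = LinearMap.id := by rw [hlam, algebraMap_comp_convOne, conv_one_left]
  have hgf : g ∘ₗ f = LinearMap.id := by
    calc g ∘ₗ f = conv k (Algebra.linearMap k H ∘ₗ lamInv) (g ∘ₗ LinearMap.id) :=
          comp_conv_unit k g lamInv LinearMap.id
      _ = conv k (Algebra.linearMap k H ∘ₗ lamInv)
            (conv k (Algebra.linearMap k H ∘ₗ lam) LinearMap.id) := by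
          rw [LinearMap.comp_id]
      _ = conv k (conv k (Algebra.linearMap k H ∘ₗ lamInv) (Algebra.linearMap k H ∘ₗ lam))
            LinearMap.id := (conv_assoc k _ _ _).symm
      _ = conv k (Algebra.linearMap k H ∘ₗ conv k lamInv lam) LinearMap.id := by
          rw [algebraMap_comp_conv]
      _ = LinearMap.id := by rw [hlam', algebraMap_comp_convOne, conv_one_left]
  refine ⟨?_, ?_, ?_, ?_⟩
  · -- bijectivity
    refine Function.bijective_iff_has_inverse.mpr ⟨g, fun x => ?_, fun x => ?_⟩
    · simpa using LinearMap.congr_fun hgf x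
    · simpa using LinearMap.congr_fun hfg x
  · -- multiplicativity
    have hforms : conv k (LinearMap.mul' k k ∘ₗ TensorProduct.map lamInv lamInv) β
        = conv k α (lamInv ∘ₗ LinearMap.mul' k H) := by
      have hΛL : conv k (LinearMap.mul' k k ∘ₗ TensorProduct.map lamInv lamInv)
          (LinearMap.mul' k k ∘ₗ TensorProduct.map lam lam) = convOne k := by
        rw [conv_forms_tmul, hlam', convOne_tensor]
      rw [hcohom,
        ← conv_assoc k (LinearMap.mul' k k ∘ₗ TensorProduct.map lamInv lamInv)
          (conv k (LinearMap.mul' k k ∘ₗ TensorProduct.map lam lam) α)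
          (lamInv ∘ₗ LinearMap.mul' k H),
        ← conv_assoc k (LinearMap.mul' k k ∘ₗ TensorProduct.map lamInv lamInv)
          (LinearMap.mul' k k ∘ₗ TensorProduct.map lam lam) α,
        hΛL, conv_one_left]
    have hfμ : f ∘ₗ LinearMap.mul' k H
        = conv k (Algebra.linearMap k H ∘ₗ (lamInv ∘ₗ LinearMap.mul' k H))
            (LinearMap.mul' k H) := by
      have h := conv_comp_coalgHom k (LinearMap.mul' k H) (mul'_coalgHom k)
        (Algebra.linearMap k H ∘ₗ lamInv) LinearMap.id
      rw [hfdef, h, LinearMap.id_comp, LinearMap.comp_assoc]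
    have hmapff : TensorProduct.map f f
        = conv k (Algebra.linearMap k (H ⊗[k] H) ∘ₗ
            (LinearMap.mul' k k ∘ₗ TensorProduct.map lamInv lamInv)) LinearMap.id := by
      rw [hfdef, map_conv_conv k lamInv lamInv LinearMap.id LinearMap.id,
        TensorProduct.map_id]
    have key : f ∘ₗ twMul k α = twMul k β ∘ₗ TensorProduct.map f f := by
      calc f ∘ₗ twMul k α
          = conv k (Algebra.linearMap k H ∘ₗ α) (f ∘ₗ LinearMap.mul' k H) := by
            unfold twMul; exact comp_conv_unit k f α (LinearMap.mul' k H)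
        _ = conv k (Algebra.linearMap k H ∘ₗ α)
              (conv k (Algebra.linearMap k H ∘ₗ (lamInv ∘ₗ LinearMap.mul' k H))
                (LinearMap.mul' k H)) := by rw [hfμ]
        _ = conv k (conv k (Algebra.linearMap k H ∘ₗ α)
              (Algebra.linearMap k H ∘ₗ (lamInv ∘ₗ LinearMap.mul' k H)))
              (LinearMap.mul' k H) := (conv_assoc k _ _ _).symm
        _ = conv k (Algebra.linearMap k H ∘ₗ conv k α (lamInv ∘ₗ LinearMap.mul' k H))
              (LinearMap.mul' k H) := by rw [algebraMap_comp_conv]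
        _ = conv k (Algebra.linearMap k H ∘ₗ
              conv k (LinearMap.mul' k k ∘ₗ TensorProduct.map lamInv lamInv) β)
              (LinearMap.mul' k H) := by rw [hforms]
        _ = conv k (conv k
              (Algebra.linearMap k H ∘ₗ (LinearMap.mul' k k ∘ₗ TensorProduct.map lamInv lamInv))
              (Algebra.linearMap k H ∘ₗ β)) (LinearMap.mul' k H) := by
            rw [algebraMap_comp_conv]
        _ = conv k
              (Algebra.linearMap k H ∘ₗ (LinearMap.mul' k k ∘ₗ TensorProduct.map lamInv lamInv))
              (conv k (Algebra.linearMap k H ∘ₗ β) (LinearMap.mul' k H)) := conv_assoc k _ _ _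
        _ = conv k
              (Algebra.linearMap k H ∘ₗ (LinearMap.mul' k k ∘ₗ TensorProduct.map lamInv lamInv))
              (twMul k β ∘ₗ LinearMap.id) := by unfold twMul; rw [LinearMap.comp_id]
        _ = twMul k β ∘ₗ conv k (Algebra.linearMap k (H ⊗[k] H) ∘ₗ
              (LinearMap.mul' k k ∘ₗ TensorProduct.map lamInv lamInv)) LinearMap.id :=
            (comp_conv_unit k (twMul k β)
              (LinearMap.mul' k k ∘ₗ TensorProduct.map lamInv lamInv) LinearMap.id).symm
        _ = twMul k β ∘ₗ TensorProduct.map f f := by rw [hmapff]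
    intro x y
    simpa using LinearMap.congr_fun key (x ⊗ₜ[k] y)
  · -- unit
    have hcom11 : Coalgebra.comul (R := k) ((1 : H) ⊗ₜ[k] (1 : H))
        = ((1 : H) ⊗ₜ[k] (1 : H)) ⊗ₜ[k] ((1 : H) ⊗ₜ[k] (1 : H)) := by
      rw [comul_tensor_def]
      simp [Bialgebra.comul_one, Algebra.TensorProduct.one_def]
    have hf1 : f (1 : H) = lamInv 1 • (1 : H) := by
      rw [hfdef]
      simp [conv, Bialgebra.comul_one, Algebra.TensorProduct.one_def,
        Algebra.algebraMap_eq_smul_one]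
    have e1 : lam 1 * lamInv 1 = 1 := by
      have h := LinearMap.congr_fun hlam (1 : H)
      simpa [conv, convOne, Bialgebra.comul_one, Algebra.TensorProduct.one_def] using h
    have e2 : α ((1 : H) ⊗ₜ[k] 1) * αinv ((1 : H) ⊗ₜ[k] 1) = 1 := by
      have h := LinearMap.congr_fun hαinv.1 ((1 : H) ⊗ₜ[k] 1)
      simpa [conv, convOne, hcom11, counit_tensor_def] using h
    have e3 := LinearMap.congr_fun hcohom ((1 : H) ⊗ₜ[k] 1)
    simp only [conv, LinearMap.comp_apply, hcom11, TensorProduct.map_tmul,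
      LinearMap.mul'_apply, LinearMap.id_apply, mul_one, one_mul] at e3
    have hα0 : α ((1 : H) ⊗ₜ[k] 1) ≠ 0 := left_ne_zero_of_mul_eq_one e2
    have hscal : (β ((1 : H) ⊗ₜ[k] 1))⁻¹ = (α ((1 : H) ⊗ₜ[k] 1))⁻¹ * lamInv 1 := by
      refine inv_eq_of_mul_eq_one_right ?_
      rw [e3]
      calc lam 1 * lam 1 * α ((1 : H) ⊗ₜ[k] 1) * lamInv 1 *
            ((α ((1 : H) ⊗ₜ[k] 1))⁻¹ * lamInv 1)
          = (lam 1 * lamInv 1) * (lam 1 * lamInv 1) *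
            (α ((1 : H) ⊗ₜ[k] 1) * (α ((1 : H) ⊗ₜ[k] 1))⁻¹) := by ring
        _ = 1 := by rw [e1, mul_inv_cancel₀ hα0]; ring
    rw [map_smul, hf1, smul_smul, hscal]
  · -- comodule morphism
    calc Coalgebra.comul (R := k) ∘ₗ f
        = conv k (Algebra.linearMap k (H ⊗[k] H) ∘ₗ lamInv)
            (Coalgebra.comul ∘ₗ LinearMap.id) := by
          rw [hfdef]; exact comp_conv_unit k Coalgebra.comul lamInv LinearMap.id
      _ = conv k (Algebra.linearMap k (H ⊗[k] H) ∘ₗ lamInv)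
            (TensorProduct.map LinearMap.id LinearMap.id ∘ₗ Coalgebra.comul) := by
          rw [LinearMap.comp_id, TensorProduct.map_id, LinearMap.id_comp]
      _ = TensorProduct.map (conv k (Algebra.linearMap k H ∘ₗ lamInv) LinearMap.id)
            LinearMap.id ∘ₗ Coalgebra.comul :=
          (map_convunit_comp_comul k lamInv LinearMap.id LinearMap.id).symm
      _ = TensorProduct.map f LinearMap.id ∘ₗ Coalgebra.comul := by rw [hfdef]
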